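/- Let M > 2 be an even squarefree integer such that −1 is a global norm from K = ℚ(√M), and suppose the fundamental unit satisfies N(ε_K) = −1. Then the prime ideal 𝔮₂ of 𝒪_K above 2 is not principal. -/

import Mathlib

open NumberField

set_option maxHeartbeats 1000000

/-- The real quadratic field `K = ℚ(√M)`, realized inside `ℝ`. -/
noncomputable def Ksqrt (M : ℕ) : IntermediateField ℚ ℝ :=
  IntermediateField.adjoin ℚ {Real.sqrt M}

/-- `ε` is the fundamental unit of `ℚ(√M)`: `ε > 1` and `ε` is minimal among units `> 1`. -/
def IsFundamentalUnit (M : ℕ) (ε : (𝓞 (Ksqrt M))ˣ) : Prop :=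
  1 < (((ε : 𝓞 (Ksqrt M)) : Ksqrt M) : ℝ) ∧
    ∀ u : (𝓞 (Ksqrt M))ˣ, 1 < (((u : 𝓞 (Ksqrt M)) : Ksqrt M) : ℝ) →
      (((ε : 𝓞 (Ksqrt M)) : Ksqrt M) : ℝ) ≤ (((u : 𝓞 (Ksqrt M)) : Ksqrt M) : ℝ)

/-- Given the family `Q` of ramified primes (`Q q` is the prime ideal above `q`),
this is the squarefree product ideal `𝔪_d = ∏_{q prime, q ∣ d} 𝔮_q`. -/
noncomputable def mIdeal (M : ℕ) (Q : ℕ → Ideal (𝓞 (Ksqrt M))) (d : ℕ) :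
    Ideal (𝓞 (Ksqrt M)) :=
  ∏ q ∈ d.primeFactors, Q q

/- ### Auxiliary material -/

section Aux

open Polynomial

lemma irr_of_sq_eq {r : ℝ} {n : ℕ} (h : r ^ 2 = n) (hn : ¬ IsSquare n) : Irrational r := by
  have h1 : Irrational (Real.sqrt n) := irrational_sqrt_natCast_iff.mpr hn
  have h2 : Real.sqrt n = |r| := by rw [← h, Real.sqrt_sq_eq_abs]
  rw [h2] at h1
  rcases abs_cases r with ⟨he, _⟩ | ⟨he, _⟩
  · rwa [he] at h1
  · rw [he] at h1
    exact irrational_neg_iff.mp h1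

lemma rat_comb_zero {r : ℝ} (hr : Irrational r) {a b : ℚ} (h : (a : ℝ) + (b : ℝ) * r = 0) :
    a = 0 ∧ b = 0 := by
  by_cases hb : b = 0
  · refine ⟨?_, hb⟩
    subst hb
    simpa using h
  · exfalso
    have : r = ((-a / b : ℚ) : ℝ) := by
      have hb' : (b : ℝ) ≠ 0 := by exact_mod_cast hb
      push_cast
      field_simp
      linarith
    exact hr ⟨-a / b, this.symm⟩

lemma not_isSquare_of_squarefree {n : ℕ} (h : Squarefree n) (h1 : n ≠ 1) : ¬ IsSquare n := by
  rintro ⟨k, hk⟩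
  have hu := h k (by rw [hk])
  exact h1 (by rw [hk, Nat.isUnit_iff.mp hu])

lemma finrank_Ksqrt (M : ℕ) (hM : 2 < M) (hsf : Squarefree M) :
    Module.finrank ℚ (Ksqrt M) = 2 := by
  have hnsq : ¬ IsSquare M := not_isSquare_of_squarefree hsf (by omega)
  have hroot : (Real.sqrt M) ^ 2 = (M : ℝ) := Real.sq_sqrt (by positivity)
  have hint : IsIntegral ℚ (Real.sqrt M) := by
    refine ⟨X ^ 2 - C (M : ℚ), monic_X_pow_sub_C _ (by norm_num), ?_⟩
    simp [hroot]
  have hirr : Irreducible (X ^ 2 - C (M : ℚ)) := by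
    refine X_pow_sub_C_irreducible_of_prime Nat.prime_two ?_
    intro b hb
    have hbr : ((b : ℝ)) ^ 2 = (M : ℝ) := by exact_mod_cast congrArg (Rat.cast : ℚ → ℝ) hb
    exact (irr_of_sq_eq hbr hnsq) ⟨b, rfl⟩
  have hmin : minpoly ℚ (Real.sqrt M) = X ^ 2 - C (M : ℚ) := by
    refine (minpoly.eq_of_irreducible_of_monic hirr ?_ (monic_X_pow_sub_C _ (by norm_num))).symm
    simp [hroot]
  have hfr : Module.finrank ℚ (IntermediateField.adjoin ℚ {Real.sqrt M}) =
      (minpoly ℚ (Real.sqrt M)).natDegree := IntermediateField.adjoin.finrank hint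
  rw [Ksqrt, hfr, hmin]
  exact natDegree_X_pow_sub_C

/-- The embedding of the ring of integers of `ℚ(√M)` into `ℝ`. -/
noncomputable def psi (M : ℕ) : 𝓞 (Ksqrt M) →+* ℝ :=
  (algebraMap (Ksqrt M) ℝ).comp (algebraMap (𝓞 (Ksqrt M)) (Ksqrt M))

lemma psi_inj (M : ℕ) : Function.Injective (psi M) :=
  (algebraMap (Ksqrt M) ℝ).injective.comp RingOfIntegers.coe_injective

/-- The induced map on units, valued in `ℝˣ`. -/
noncomputable def phi (M : ℕ) : (𝓞 (Ksqrt M))ˣ →* ℝˣ := Units.map (psi M).toMonoidHom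

/-- The map from units of the ring of integers into `K`. -/
noncomputable def theK (M : ℕ) : (𝓞 (Ksqrt M))ˣ →* Ksqrt M :=
  (algebraMap (𝓞 (Ksqrt M)) (Ksqrt M)).toMonoidHom.comp (Units.coeHom _)

/-- The norm of a unit, as a rational number. -/
noncomputable def NU (M : ℕ) [NumberField (Ksqrt M)] : (𝓞 (Ksqrt M))ˣ →* ℚ :=
  (Algebra.norm ℚ).comp (theK M)

/-- Any totally-positive-at-the-real-place unit is a power of the fundamental unit:
precisely, any unit with positive image in `ℝ` is `ε ^ n` for some `n : ℤ`. -/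
lemma unit_eq_zpow (M : ℕ) [NumberField (Ksqrt M)]
    (ε : (𝓞 (Ksqrt M))ˣ) (hε : IsFundamentalUnit M ε)
    (w : (𝓞 (Ksqrt M))ˣ) (hw : (0:ℝ) < ((phi M w : ℝˣ) : ℝ)) :
    ∃ n : ℤ, w = ε ^ n := by
  have hεR : (1:ℝ) < ((phi M ε : ℝˣ) : ℝ) := hε.1
  have hεRpos : (0:ℝ) < ((phi M ε : ℝˣ) : ℝ) := lt_trans one_pos hεR
  obtain ⟨n, hn1, hn2⟩ := exists_mem_Ico_zpow (x := ((phi M w : ℝˣ) : ℝ))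
    (y := ((phi M ε : ℝˣ) : ℝ)) hw hεR
  refine ⟨n, ?_⟩
  set v : (𝓞 (Ksqrt M))ˣ := ε ^ (-n) * w with hvdef
  have hvval : ((phi M v : ℝˣ) : ℝ) = ((phi M ε : ℝˣ) : ℝ) ^ (-n) * ((phi M w : ℝˣ) : ℝ) := by
    rw [hvdef, map_mul, Units.val_mul, map_zpow, Units.val_zpow_eq_zpow_val]
  have hv1 : (1:ℝ) ≤ ((phi M v : ℝˣ) : ℝ) := by
    rw [hvval]
    have h1 : ((phi M ε : ℝˣ) : ℝ) ^ (-n) * ((phi M ε : ℝˣ) : ℝ) ^ n = 1 := by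
      rw [← zpow_add₀ (ne_of_gt hεRpos)]
      simp
    calc (1:ℝ) = ((phi M ε : ℝˣ) : ℝ) ^ (-n) * ((phi M ε : ℝˣ) : ℝ) ^ n := h1.symm
    _ ≤ _ := by
      apply mul_le_mul_of_nonneg_left hn1
      positivity
  have hv2 : ((phi M v : ℝˣ) : ℝ) < ((phi M ε : ℝˣ) : ℝ) := by
    rw [hvval]
    have h1 : ((phi M ε : ℝˣ) : ℝ) ^ (-n) * ((phi M ε : ℝˣ) : ℝ) ^ (n+1)
        = ((phi M ε : ℝˣ) : ℝ) := by
      rw [← zpow_add₀ (ne_of_gt hεRpos)]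
      simp
    calc ((phi M ε : ℝˣ) : ℝ) ^ (-n) * ((phi M w : ℝˣ) : ℝ)
        < ((phi M ε : ℝˣ) : ℝ) ^ (-n) * ((phi M ε : ℝˣ) : ℝ) ^ (n+1) := by
          apply mul_lt_mul_of_pos_left hn2
          positivity
    _ = _ := h1
  have hveq : v = 1 := by
    have hnotgt : ¬ (1:ℝ) < ((phi M v : ℝˣ) : ℝ) := by
      intro hgt
      exact absurd (hε.2 v hgt) (by exact not_le.mpr hv2)
    have hv : ((phi M v : ℝˣ) : ℝ) = 1 := le_antisymm (not_lt.mp hnotgt) hv1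
    have hval1 : psi M ((v : 𝓞 (Ksqrt M))) = psi M 1 := by
      have hrfl : ((phi M v : ℝˣ) : ℝ) = psi M ((v : 𝓞 (Ksqrt M))) := rfl
      rw [← hrfl, hv, map_one]
    exact Units.ext (psi_inj M hval1)
  have h1 : (ε ^ (-n))⁻¹ = w :=
    inv_eq_of_mul_eq_one_right (show ε ^ (-n) * w = 1 from hveq)
  rw [← h1, ← zpow_neg, neg_neg]

/-- A unit of norm `1` which is an integer power of the fundamental unit (whose norm is `-1`)
is a square of a unit. -/
lemma unit_sq (M : ℕ) [NumberField (Ksqrt M)]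
    (ε : (𝓞 (Ksqrt M))ˣ)
    (hnorm : Algebra.norm ℚ ((ε : 𝓞 (Ksqrt M)) : Ksqrt M) = -1)
    (w : (𝓞 (Ksqrt M))ˣ) (hn : ∃ n : ℤ, w = ε ^ n) (hNw : NU M w = 1) :
    ∃ u : (𝓞 (Ksqrt M))ˣ, w = u ^ 2 := by
  obtain ⟨n, hw⟩ := hn
  have hNUε : NU M ε = -1 := hnorm
  rcases Int.even_or_odd n with ⟨k, hk⟩ | ⟨k, hk⟩
  · refine ⟨ε ^ k, ?_⟩
    rw [hw, hk, zpow_add, ← sq]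
  · exfalso
    have hodd : w * ((ε ^ (-k)) ^ 2) = ε := by
      rw [hw, hk, sq, ← zpow_add, ← zpow_add,
        show 2 * k + 1 + (-k + -k) = (1:ℤ) by ring, zpow_one]
    have h2 := congrArg (NU M) hodd
    rw [map_mul, map_pow, hNw, hNUε, one_mul] at h2
    have h3 := sq_nonneg (NU M (ε ^ (-k)))
    rw [h2] at h3
    exact absurd h3 (by norm_num)

/-- `√2` does not lie in `ℚ(√M)` for `M > 2` even and squarefree. -/
lemma no_sqrt2 (M : ℕ) (hM : 2 < M) (hMeven : Even M) (hsf : Squarefree M)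
    [NumberField (Ksqrt M)]
    (t : Ksqrt M) (ht2 : t ^ 2 = 2) : False := by
  have hfr : Module.finrank ℚ (Ksqrt M) = 2 := finrank_Ksqrt M hM hsf
  obtain ⟨m, hm⟩ : ∃ m, M = 2 * m := (even_iff_two_dvd.mp hMeven).elim fun m h => ⟨m, h⟩
  have hxmem : Real.sqrt M ∈ Ksqrt M := IntermediateField.subset_adjoin ℚ {Real.sqrt M} rfl
  obtain ⟨xK, hxval⟩ : ∃ xK : Ksqrt M, (xK : ℝ) = Real.sqrt M := ⟨⟨_, hxmem⟩, rfl⟩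
  have hx2 : (xK : ℝ) ^ 2 = (M : ℝ) := by rw [hxval]; exact Real.sq_sqrt (by positivity)
  have htR : ((t : ℝ)) ^ 2 = 2 := by
    have h1 : (((t ^ 2 : Ksqrt M)) : ℝ) = ((2 : Ksqrt M) : ℝ) := by rw [ht2]
    push_cast at h1
    exact h1
  have hmsf : Squarefree m := hsf.squarefree_of_dvd ⟨2, by omega⟩
  have hnsq : ¬ IsSquare M := not_isSquare_of_squarefree hsf (by omega)
  have h2sq : ¬ IsSquare 2 := not_isSquare_of_squarefree Nat.prime_two.squarefree (by norm_num)
  have h2Msq : ¬ IsSquare (2 * M) := by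
    rintro ⟨j, hj⟩
    have hjeven : j % 2 = 0 := by
      rcases Nat.even_or_odd j with h | h
      · exact Nat.even_iff.mp h
      · exfalso
        have h1 : Odd (j * j) := h.mul h
        have h2 : Even (j * j) := by rw [← hj]; exact ⟨M, by ring⟩
        rw [Nat.even_iff] at h2
        rw [Nat.odd_iff] at h1
        omega
    obtain ⟨j', rfl⟩ : ∃ j', j = 2 * j' := ⟨j / 2, by omega⟩
    have hjm : m = j' * j' := by
      have h1 : 2 * (2 * m) = (2 * j') * (2 * j') := by rw [← hm, hj]
      have h2 : (2 * j') * (2 * j') = 4 * (j' * j') := by ring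
      rw [h2] at h1
      set J := j' * j' with hJ
      omega
    exact (not_isSquare_of_squarefree hmsf (by omega)) ⟨j', hjm⟩
  have hirrx : Irrational ((xK : ℝ)) := by
    rw [hxval]
    exact irrational_sqrt_natCast_iff.mpr hnsq
  have hirrt : Irrational ((t : ℝ)) := by
    refine irr_of_sq_eq (n := 2) ?_ h2sq
    rw [htR]; norm_num
  have hirrtx : Irrational ((t : ℝ) * (xK : ℝ)) := by
    refine irr_of_sq_eq (n := 2 * M) ?_ h2Msq
    rw [mul_pow, htR, hx2]
    push_cast
    ring
  have hliR : LinearIndependent ℚ ![(1 : ℝ), ((t : ℝ)), ((xK : ℝ))] := by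
    rw [Fintype.linearIndependent_iff]
    intro gq hsum
    rw [Fin.sum_univ_three] at hsum
    simp only [Matrix.cons_val_zero, Matrix.cons_val_one, Matrix.head_cons,
      Matrix.cons_val_two, Matrix.tail_cons, Rat.smul_def, mul_one] at hsum
    have hkey : gq 1 = 0 ∨ gq 2 = 0 := by
      have hsq2 : ((2 * gq 1 ^ 2 + M * gq 2 ^ 2 - gq 0 ^ 2 : ℚ) : ℝ)
          + ((2 * gq 1 * gq 2 : ℚ) : ℝ) * ((t : ℝ) * (xK : ℝ)) = 0 := by
        push_cast
        linear_combination ((gq 1 : ℝ) * (t : ℝ) + (gq 2 : ℝ) * (xK : ℝ) - (gq 0 : ℝ)) * hsum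
          - ((gq 1 : ℝ))^2 * htR - ((gq 2 : ℝ))^2 * hx2
      have h0 := (rat_comb_zero hirrtx hsq2).2
      rcases mul_eq_zero.mp h0 with h | h
      · rcases mul_eq_zero.mp h with h' | h'
        · norm_num at h'
        · exact Or.inl h'
      · exact Or.inr h
    have hall : gq 0 = 0 ∧ gq 1 = 0 ∧ gq 2 = 0 := by
      rcases hkey with h1 | h2
      · have hs' : ((gq 0 : ℚ) : ℝ) + ((gq 2 : ℚ) : ℝ) * ((xK : ℝ)) = 0 := by
          rw [h1] at hsum
          push_cast at hsum ⊢
          linarith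
        obtain ⟨e0, e2⟩ := rat_comb_zero hirrx hs'
        exact ⟨e0, h1, e2⟩
      · have hs' : ((gq 0 : ℚ) : ℝ) + ((gq 1 : ℚ) : ℝ) * ((t : ℝ)) = 0 := by
          rw [h2] at hsum
          push_cast at hsum ⊢
          linarith
        obtain ⟨e0, e1⟩ := rat_comb_zero hirrt hs'
        exact ⟨e0, e1, h2⟩
    intro i
    fin_cases i
    · exact hall.1
    · exact hall.2.1
    · exact hall.2.2
  have hli : LinearIndependent ℚ ![(1 : Ksqrt M), t, xK] := by
    apply LinearIndependent.of_comp ((IsScalarTower.toAlgHom ℚ (Ksqrt M) ℝ).toLinearMap)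
    have hcomp : (((IsScalarTower.toAlgHom ℚ (Ksqrt M) ℝ).toLinearMap : Ksqrt M → ℝ)
        ∘ ![(1 : Ksqrt M), t, xK]) = ![(1 : ℝ), ((t : ℝ)), ((xK : ℝ))] := by
      funext i
      fin_cases i <;> simp
    rw [hcomp]
    exact hliR
  have hcard := LinearIndependent.fintype_card_le_finrank hli
  rw [hfr, Fintype.card_fin] at hcard
  norm_num at hcard

/-- If `2 = α ^ 2 * γ` with `α` a non-zero non-unit, then `γ` is a unit of norm `1`. -/
lemma gamma_unit (M : ℕ) (hM : 2 < M) (hsf : Squarefree M) [NumberField (Ksqrt M)]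
    (α γ : 𝓞 (Ksqrt M)) (hαne : α ≠ 0) (hαnu : ¬ IsUnit α) (hγ : 2 = α ^ 2 * γ) :
    IsUnit γ ∧ Algebra.norm ℚ ((γ : Ksqrt M)) = 1 := by
  have hfr : Module.finrank ℚ (Ksqrt M) = 2 := finrank_Ksqrt M hM hsf
  have hN2 : Algebra.norm ℚ ((2 : 𝓞 (Ksqrt M)) : Ksqrt M) = 4 := by
    have h1 : ((2 : 𝓞 (Ksqrt M)) : Ksqrt M) = algebraMap ℚ (Ksqrt M) 2 :=
      (map_ofNat (algebraMap (𝓞 (Ksqrt M)) (Ksqrt M)) 2).trans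
        (map_ofNat (algebraMap ℚ (Ksqrt M)) 2).symm
    rw [h1, Algebra.norm_algebraMap, hfr]
    norm_num
  obtain ⟨a, ha⟩ : ∃ a : ℤ, (algebraMap ℤ ℚ) a = Algebra.norm ℚ ((α : Ksqrt M)) :=
    IsIntegrallyClosed.isIntegral_iff.mp (Algebra.isIntegral_norm ℚ α.2)
  rw [eq_intCast] at ha
  obtain ⟨g, hg⟩ : ∃ g : ℤ, (algebraMap ℤ ℚ) g = Algebra.norm ℚ ((γ : Ksqrt M)) :=
    IsIntegrallyClosed.isIntegral_iff.mp (Algebra.isIntegral_norm ℚ γ.2)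
  rw [eq_intCast] at hg
  have hγK : ((2 : 𝓞 (Ksqrt M)) : Ksqrt M) = ((α : Ksqrt M)) ^ 2 * ((γ : Ksqrt M)) := by
    exact_mod_cast congrArg (fun z : 𝓞 (Ksqrt M) => (z : Ksqrt M)) hγ
  have heq : (4 : ℚ) = (Algebra.norm ℚ ((α : Ksqrt M))) ^ 2 * Algebra.norm ℚ ((γ : Ksqrt M)) := by
    rw [← hN2, hγK, map_mul, map_pow]
  have heqZ : (4 : ℤ) = a ^ 2 * g := by
    rw [← ha, ← hg] at heq
    exact_mod_cast heq
  have haNe : a ≠ 0 := by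
    intro h0
    rw [h0] at ha
    have h1 : Algebra.norm ℚ ((α : Ksqrt M)) = 0 := by simpa using ha.symm
    have hα0 : ((α : Ksqrt M)) ≠ 0 := by
      intro hz
      exact hαne (by exact_mod_cast hz)
    exact (Algebra.norm_ne_zero_iff.mpr hα0) h1
  have haNe1 : ¬ (a = 1 ∨ a = -1) := by
    intro h1
    apply hαnu
    apply NumberField.isUnit_iff_norm.mpr
    rw [RingOfIntegers.coe_norm, ← ha]
    rcases h1 with h | h <;> rw [h] <;> norm_num
  have ha4 : a ^ 2 = 4 := by
    have h1 : a ^ 2 ≤ 4 := Int.le_of_dvd (by norm_num) ⟨g, heqZ⟩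
    have h2 : 2 ≤ a ∨ a ≤ -2 := by omega
    rcases h2 with h | h <;> nlinarith
  have hg1 : g = 1 := by rw [ha4] at heqZ; omega
  have hNγ : Algebra.norm ℚ ((γ : Ksqrt M)) = 1 := by rw [← hg, hg1]; norm_num
  refine ⟨?_, hNγ⟩
  apply NumberField.isUnit_iff_norm.mpr
  rw [RingOfIntegers.coe_norm, hNγ]
  norm_num

end Aux

/-- For `M > 2` even squarefree with `-1` a global norm from `K = ℚ(√M)` and
`N(ε_K) = -1`, the prime ideal `𝔮₂` of `𝒪_K` above `2` is not principal. -/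
theorem stmt_12 (M : ℕ) (hM : 2 < M) (hMeven : Even M) (hsf : Squarefree M)
    [NumberField (Ksqrt M)]
    (hglob : ∃ x : Ksqrt M, Algebra.norm ℚ x = -1)
    (ε : (𝓞 (Ksqrt M))ˣ) (hε : IsFundamentalUnit M ε)
    (hnorm : Algebra.norm ℚ ((ε : 𝓞 (Ksqrt M)) : Ksqrt M) = -1)
    (Q2 : Ideal (𝓞 (Ksqrt M))) (hQ2 : Q2.IsPrime ∧ (2 : 𝓞 (Ksqrt M)) ∈ Q2) :
    ¬ Q2.IsPrincipal := by
  intro hpr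
  obtain ⟨m, hm⟩ : ∃ m, M = 2 * m := (even_iff_two_dvd.mp hMeven).elim fun m h => ⟨m, h⟩
  have hmodd : ¬ (2 ∣ m) := by
    intro ⟨j, hj⟩
    have h44 : (2*2) ∣ M := ⟨j, by omega⟩
    exact (Nat.prime_two).not_isUnit (hsf 2 h44)
  have hxmem : Real.sqrt M ∈ Ksqrt M := IntermediateField.subset_adjoin ℚ {Real.sqrt M} rfl
  obtain ⟨xK, hxval⟩ : ∃ xK : Ksqrt M, (xK : ℝ) = Real.sqrt M := ⟨⟨_, hxmem⟩, rfl⟩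
  have hx2 : (xK : ℝ) ^ 2 = (M : ℝ) := by rw [hxval]; exact Real.sq_sqrt (by positivity)
  have hxKsq : xK ^ 2 = (M : Ksqrt M) := by
    apply Subtype.ext
    push_cast
    exact hx2
  have hint : IsIntegral ℤ xK := by
    refine ⟨Polynomial.X ^ 2 - Polynomial.C (M : ℤ),
      Polynomial.monic_X_pow_sub_C _ (by norm_num), ?_⟩
    simp [hxKsq]
  obtain ⟨s, hsval⟩ : ∃ s : 𝓞 (Ksqrt M), (s : Ksqrt M) = xK := ⟨⟨xK, hint⟩, rfl⟩
  have hssq : s ^ 2 = (M : 𝓞 (Ksqrt M)) := by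
    have h1 : ((s ^ 2 : 𝓞 (Ksqrt M)) : Ksqrt M) = ((M : 𝓞 (Ksqrt M)) : Ksqrt M) := by
      push_cast [hsval]
      exact hxKsq
    exact_mod_cast h1
  -- the generator
  obtain ⟨α, hα⟩ := hpr.principal
  rw [Ideal.submodule_span_eq] at hα
  have h2mem : (2 : 𝓞 (Ksqrt M)) ∈ Q2 := hQ2.2
  have hα2 : α ∣ 2 := Ideal.mem_span_singleton.mp (hα ▸ h2mem)
  have hsmem : s ∈ Q2 := by
    have hss : s * s ∈ Q2 := by
      have h1 : s * s = 2 * (m : 𝓞 (Ksqrt M)) := by rw [← sq, hssq]; push_cast [hm]; ring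
      rw [h1]
      exact Ideal.mul_mem_right _ _ h2mem
    rcases hQ2.1.mem_or_mem hss with h | h <;> exact h
  have hαs : α ∣ s := Ideal.mem_span_singleton.mp (hα ▸ hsmem)
  have hαne : α ≠ 0 := by
    rintro rfl
    have h0 : (2 : 𝓞 (Ksqrt M)) = 0 := by
      rcases hα2 with ⟨c, hc⟩
      simpa using hc
    exact two_ne_zero h0
  have hαnu : ¬ IsUnit α := fun hu =>
    hQ2.1.ne_top (by rw [hα, Ideal.span_singleton_eq_top]; exact hu)
  -- Bezout : α ^ 2 ∣ 2
  obtain ⟨u, v, huv⟩ : ∃ u v : ℤ, 2 * u + m * v = 1 := by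
    have hg : Int.gcd 2 m = 1 := by
      have h1 : Nat.gcd 2 m = 1 :=
        Nat.Coprime.gcd_eq_one (Nat.coprime_two_left.mpr (Nat.odd_iff.mpr (by omega)))
      simpa [Int.gcd] using h1
    exact ⟨Int.gcdA 2 m, Int.gcdB 2 m, by
      have h2 := Int.gcd_eq_gcd_ab 2 m
      rw [hg] at h2
      push_cast at h2
      linarith⟩
  have hdvd2 : α ^ 2 ∣ 2 := by
    have h4 : α ^ 2 ∣ (4 : 𝓞 (Ksqrt M)) := by
      rcases hα2 with ⟨c, hc⟩
      refine ⟨c ^ 2, ?_⟩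
      have h22 : (4 : 𝓞 (Ksqrt M)) = 2 * 2 := by norm_num
      rw [h22, hc]
      ring
    have hM' : α ^ 2 ∣ (M : 𝓞 (Ksqrt M)) := by
      rcases hαs with ⟨c, hc⟩
      rw [← hssq, hc]
      exact ⟨c ^ 2, by ring⟩
    have key : (2 : 𝓞 (Ksqrt M)) = 4 * (u : 𝓞 (Ksqrt M)) + (M : 𝓞 (Ksqrt M)) * (v : 𝓞 (Ksqrt M)) := by
      have h1 : ((2 : ℤ) : 𝓞 (Ksqrt M)) = ((4 * u + (M : ℤ) * v : ℤ) : 𝓞 (Ksqrt M)) := by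
        congr 1
        have h2 : (M : ℤ) = 2 * m := by exact_mod_cast congrArg (Nat.cast : ℕ → ℤ) hm
        rw [h2]; linarith [huv]
      push_cast at h1
      exact h1
    rw [key]
    exact dvd_add (Dvd.dvd.mul_right h4 _) (Dvd.dvd.mul_right hM' _)
  obtain ⟨γ, hγ⟩ := hdvd2
  obtain ⟨hγu, hNγ⟩ := gamma_unit M hM hsf α γ hαne hαnu hγ
  obtain ⟨γu, hγuv⟩ := hγu
  -- the inverse unit has positive real image
  have hαR : psi M α ≠ 0 := fun h => hαne (psi_inj M (by simpa using h))
  have hγR : (2 : ℝ) = psi M α ^ 2 * psi M γ := by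
    have h1 := congrArg (psi M) hγ
    rw [map_mul, map_pow] at h1
    rw [← h1]
    exact (map_ofNat (psi M) 2).symm
  have hγRpos : 0 < psi M γ := by
    nlinarith [sq_nonneg (psi M α), (pow_ne_zero 2 hαR : psi M α ^ 2 ≠ 0)]
  have hphival : ∀ w : (𝓞 (Ksqrt M))ˣ, ((phi M w : ℝˣ) : ℝ) = psi M ↑w := fun _ => rfl
  have hγuval : ((phi M γu : ℝˣ) : ℝ) = psi M γ := by rw [hphival, hγuv]
  have hηpos : (0:ℝ) < ((phi M γu⁻¹ : ℝˣ) : ℝ) := by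
    have h1 : ((phi M γu⁻¹ : ℝˣ) : ℝ) * ((phi M γu : ℝˣ) : ℝ) = 1 := by
      rw [← Units.val_mul, ← map_mul]
      simp
    have h2 : ((phi M γu⁻¹ : ℝˣ) : ℝ) = (psi M γ)⁻¹ := by
      rw [hγuval] at h1
      field_simp at h1 ⊢
      linarith [h1]
    rw [h2]
    positivity
  -- norms of units
  have hNUγ : NU M γu = 1 := by
    show Algebra.norm ℚ ((↑γu : 𝓞 (Ksqrt M)) : Ksqrt M) = 1
    rw [hγuv, hNγ]
  have hNUγi : NU M γu⁻¹ = 1 := by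
    have h1 : NU M γu⁻¹ * NU M γu = 1 := by rw [← map_mul]; simp
    rw [hNUγ, mul_one] at h1
    exact h1
  -- γu⁻¹ is the square of a unit
  obtain ⟨uu, huu⟩ := unit_sq M ε hnorm γu⁻¹ (unit_eq_zpow M ε hε γu⁻¹ hηpos) hNUγi
  -- hence √2 ∈ K
  have hγKval : ((γ : 𝓞 (Ksqrt M)) : Ksqrt M) = (theK M uu⁻¹) ^ 2 := by
    rw [← hγuv]
    show theK M γu = _
    have hγusq : γu = uu⁻¹ ^ 2 := by
      rw [← inv_inv γu, huu, ← inv_pow]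
    rw [hγusq, map_pow]
  have hγK : ((2 : 𝓞 (Ksqrt M)) : Ksqrt M) = ((α : Ksqrt M)) ^ 2 * ((γ : Ksqrt M)) := by
    exact_mod_cast congrArg (fun z : 𝓞 (Ksqrt M) => (z : Ksqrt M)) hγ
  have hcoe2 : ((2 : 𝓞 (Ksqrt M)) : Ksqrt M) = (2 : Ksqrt M) :=
    map_ofNat (algebraMap (𝓞 (Ksqrt M)) (Ksqrt M)) 2
  have ht2 : ((α : Ksqrt M) * theK M uu⁻¹) ^ 2 = 2 := by
    have h1 : ((α : Ksqrt M) * theK M uu⁻¹) ^ 2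
        = ((α : Ksqrt M)) ^ 2 * (theK M uu⁻¹) ^ 2 := by ring
    rw [h1, ← hγKval, ← hγK, hcoe2]
  exact no_sqrt2 M hM hMeven hsf ((α : Ksqrt M) * theK M uu⁻¹) ht2
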